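/- Let G=(V,E) be a finite simple graph, s,t ∈ V two distinct terminal nodes, d a positive integer, and e = {x,y} ∈ E an edge. Then e is relevant for the two-terminal diameter-constrained structure function φ_d if and only if there exist two vertex-disjoint simple paths P₁ and P₂ in G, where either P₁ goes from s to x and P₂ goes from y to t, or P₁ goes from s to y and P₂ goes from x to t, such that the total number of edges of P₁ and P₂ satisfies ℓ(P₁) + ℓ(P₂) ≤ d − 1 (so that P₁ together with the edge e and P₂ forms an s–t path with at most d edges). -/

import Mathlib

open Classical Finset

noncomputable section

/-- The two-terminal diameter-constrained structure function `φ_d`: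
`PhiStruct s t d E'` holds iff the spanning subgraph `(V, E')` contains a simple
`s`–`t` path with at most `d` edges. -/
def PhiStruct {V : Type*} (s t : V) (d : ℕ) (E' : Finset (Sym2 V)) : Prop :=
  ∃ w : (SimpleGraph.fromEdgeSet (↑E' : Set (Sym2 V))).Walk s t, w.IsPath ∧ w.length ≤ d

/-- The edge `e` is irrelevant for `φ_d`: `φ_d (E' ∪ {e}) = φ_d (E' \ {e})`
for every subset `E'` of the edge set of `G`. -/
def Irrelevant {V : Type*} [Fintype V] [DecidableEq V]
    (G : SimpleGraph V) [DecidableRel G.Adj] (s t : V) (d : ℕ) (e : Sym2 V) : Prop :=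
  ∀ E' ⊆ G.edgeFinset,
    (PhiStruct s t d (insert e E') ↔ PhiStruct s t d (E'.erase e))

open SimpleGraph in
/-- splitting a path at an edge -/
lemma path_split {V : Type*} {G : SimpleGraph V} {s t x y : V} (p : G.Walk s t)
    (hp : p.IsPath) (he : s(x, y) ∈ p.edges) :
    ∃ a b, ((a = x ∧ b = y) ∨ (a = y ∧ b = x)) ∧
      ∃ (P₁ : G.Walk s a) (P₂ : G.Walk b t), P₁.IsPath ∧ P₂.IsPath ∧
        (∀ v ∈ P₁.support, v ∉ P₂.support) ∧
        (∀ v ∈ P₁.support, v ∈ p.support) ∧ (∀ v ∈ P₂.support, v ∈ p.support) ∧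
        P₁.length + P₂.length + 1 = p.length := by
  induction p with
  | nil => simp at he
  | @cons u v w h q ih =>
    rw [SimpleGraph.Walk.cons_isPath_iff] at hp
    rw [SimpleGraph.Walk.edges_cons, List.mem_cons] at he
    rcases he with he | he
    · refine ⟨u, v, ?_, SimpleGraph.Walk.nil, q, SimpleGraph.Walk.IsPath.nil, hp.1, ?_, ?_, ?_, ?_⟩
      · rw [Sym2.eq_iff] at he; tauto
      · intro z hz
        simp only [SimpleGraph.Walk.support_nil, List.mem_singleton] at hz
        subst hz; exact hp.2
      · intro z hz; simp at hz; simp [hz]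
      · intro z hz; simp [hz]
      · simp
    · obtain ⟨a, b, hab, P₁, P₂, h1, h2, hdisj, hs1, hs2, hlen⟩ := ih hp.1 he
      have huP₁ : u ∉ P₁.support := fun hu => hp.2 (hs1 u hu)
      refine ⟨a, b, hab, SimpleGraph.Walk.cons h P₁, P₂, ?_, h2, ?_, ?_, ?_, ?_⟩
      · rw [SimpleGraph.Walk.cons_isPath_iff]; exact ⟨h1, huP₁⟩
      · intro z hz
        rw [SimpleGraph.Walk.support_cons, List.mem_cons] at hz
        rcases hz with rfl | hz
        · exact fun hz2 => hp.2 (hs2 z hz2)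
        · exact hdisj z hz
      · intro z hz
        rw [SimpleGraph.Walk.support_cons, List.mem_cons] at hz ⊢
        rcases hz with rfl | hz
        · left; rfl
        · right; exact hs1 z hz
      · intro z hz
        rw [SimpleGraph.Walk.support_cons, List.mem_cons]
        right; exact hs2 z hz
      · simp only [SimpleGraph.Walk.length_cons]; omega

open SimpleGraph in
lemma phi_mono {V : Type*} (s t : V) (d : ℕ) {E₁ E₂ : Finset (Sym2 V)}
    (h : E₁ ⊆ E₂) : PhiStruct s t d E₁ → PhiStruct s t d E₂ := by
  rintro ⟨w, hw, hlen⟩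
  have hle : ∀ e ∈ w.edges, e ∈ (fromEdgeSet (↑E₂ : Set (Sym2 V))).edgeSet := by
    intro e hew
    have := w.edges_subset_edgeSet hew
    rw [edgeSet_fromEdgeSet] at this ⊢
    exact ⟨h this.1, this.2⟩
  exact ⟨w.transfer _ hle, hw.transfer hle, by rwa [SimpleGraph.Walk.length_transfer]⟩

open SimpleGraph in
/-- an edge `e = {x,y}` is relevant for `φ_d` iff there are two
vertex-disjoint simple paths, one from `s` to one endpoint of `e` and one from the
other endpoint of `e` to `t`, with total length at most `d - 1`. -/
theorem relevant_iff_two_disjoint_paths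
    {V : Type*} [Fintype V] [DecidableEq V] (G : SimpleGraph V) [DecidableRel G.Adj]
    (s t : V) (hst : s ≠ t) (d : ℕ) (hd : 1 ≤ d) (x y : V) (hxy : G.Adj x y) :
    ¬ Irrelevant G s t d s(x, y) ↔
      ∃ (a b : V) (P₁ : G.Walk s a) (P₂ : G.Walk b t),
        ((a = x ∧ b = y) ∨ (a = y ∧ b = x)) ∧
        P₁.IsPath ∧ P₂.IsPath ∧
        (∀ v ∈ P₁.support, v ∉ P₂.support) ∧
        P₁.length + P₂.length ≤ d - 1 := by
  constructor
  · intro hirr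
    rw [Irrelevant] at hirr
    push_neg at hirr
    obtain ⟨E', hE', hniff⟩ := hirr
    have hmono := phi_mono s t d (E₁ := E'.erase s(x,y)) (E₂ := insert s(x,y) E')
      ((Finset.erase_subset _ _).trans (Finset.subset_insert _ _))
    have hins : PhiStruct s t d (insert s(x,y) E') ∧ ¬ PhiStruct s t d (E'.erase s(x,y)) := by
      tauto
    obtain ⟨⟨w, hw, hlen⟩, hner⟩ := hins
    by_cases hmem : s(x,y) ∈ w.edges
    · -- transfer w to G
      have hwG : ∀ e ∈ w.edges, e ∈ G.edgeSet := by
        intro e hew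
        have := w.edges_subset_edgeSet hew
        rw [edgeSet_fromEdgeSet] at this
        obtain ⟨h1, -⟩ := this
        rw [Finset.coe_insert, Set.mem_insert_iff] at h1
        rcases h1 with rfl | h1
        · exact hxy
        · exact (mem_edgeFinset).mp (hE' h1)
      set wG := w.transfer G hwG with hwGdef
      have hmemG : s(x,y) ∈ wG.edges := by rwa [SimpleGraph.Walk.edges_transfer]
      obtain ⟨a, b, hor, P₁, P₂, h1, h2, hdisj, -, -, hlensum⟩ :=
        path_split wG (hw.transfer hwG) hmemG
      refine ⟨a, b, P₁, P₂, hor, h1, h2, hdisj, ?_⟩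
      have : wG.length = w.length := w.length_transfer hwG
      omega
    · -- w avoids e, contradiction
      exfalso
      apply hner
      have h2 : ∀ e ∈ w.edges, e ∈ (fromEdgeSet (↑(E'.erase s(x,y)) : Set (Sym2 V))).edgeSet := by
        intro e hew
        have := w.edges_subset_edgeSet hew
        rw [edgeSet_fromEdgeSet] at this ⊢
        obtain ⟨h1, hd2⟩ := this
        rw [Finset.coe_insert, Set.mem_insert_iff] at h1
        rcases h1 with rfl | h1
        · exact absurd hew hmem
        · refine ⟨?_, hd2⟩
          simp only [Finset.coe_erase, Set.mem_diff, Set.mem_singleton_iff]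
          exact ⟨h1, fun h => hmem (h ▸ hew)⟩
      exact ⟨w.transfer _ h2, hw.transfer h2, by rwa [SimpleGraph.Walk.length_transfer]⟩
  · rintro ⟨a, b, P₁, P₂, hor, h1, h2, hdisj, hlen⟩
    intro hirr
    set E' : Finset (Sym2 V) := P₁.edges.toFinset ∪ P₂.edges.toFinset with hE'def
    clear_value E'
    have hE' : E' ⊆ G.edgeFinset := by
      intro e he
      rw [hE'def, Finset.mem_union, List.mem_toFinset, List.mem_toFinset] at he
      rw [mem_edgeFinset]
      rcases he with he | he
      · exact P₁.edges_subset_edgeSet he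
      · exact P₂.edges_subset_edgeSet he
    have hbP₂ : b ∈ P₂.support := P₂.start_mem_support
    have haP₁ : a ∈ P₁.support := P₁.end_mem_support
    have heE' : s(x,y) ∉ E' := by
      rw [hE'def, Finset.mem_union, List.mem_toFinset, List.mem_toFinset]
      rintro (he | he)
      · rcases hor with ⟨rfl, rfl⟩ | ⟨rfl, rfl⟩
        · exact hdisj b (P₁.snd_mem_support_of_mem_edges he) hbP₂
        · exact hdisj b (P₁.fst_mem_support_of_mem_edges he) hbP₂
      · rcases hor with ⟨rfl, rfl⟩ | ⟨rfl, rfl⟩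
        · exact hdisj a haP₁ (P₂.fst_mem_support_of_mem_edges he)
        · exact hdisj a haP₁ (P₂.snd_mem_support_of_mem_edges he)
    have hiff := hirr E' hE'
    -- build the path witnessing PhiStruct (insert e E')
    have hins : PhiStruct s t d (insert s(x,y) E') := by
      have hsub1 : ∀ e ∈ P₁.edges, e ∈ (fromEdgeSet (↑(insert s(x,y) E') : Set (Sym2 V))).edgeSet := by
        intro e he
        rw [edgeSet_fromEdgeSet]
        refine ⟨?_, G.not_isDiag_of_mem_edgeSet (P₁.edges_subset_edgeSet he)⟩
        rw [hE'def, Finset.coe_insert, Set.mem_insert_iff]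
        exact Or.inr (Finset.mem_coe.mpr (Finset.mem_union_left _ (List.mem_toFinset.mpr he)))
      have hsub2 : ∀ e ∈ P₂.edges, e ∈ (fromEdgeSet (↑(insert s(x,y) E') : Set (Sym2 V))).edgeSet := by
        intro e he
        rw [edgeSet_fromEdgeSet]
        refine ⟨?_, G.not_isDiag_of_mem_edgeSet (P₂.edges_subset_edgeSet he)⟩
        rw [hE'def, Finset.coe_insert, Set.mem_insert_iff]
        exact Or.inr (Finset.mem_coe.mpr (Finset.mem_union_right _ (List.mem_toFinset.mpr he)))
      have hab : G.Adj a b := by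
        rcases hor with ⟨rfl, rfl⟩ | ⟨rfl, rfl⟩
        · exact hxy
        · exact hxy.symm
      have hadj : (fromEdgeSet (↑(insert s(x,y) E') : Set (Sym2 V))).Adj a b := by
        rw [fromEdgeSet_adj]
        refine ⟨?_, hab.ne⟩
        rw [Finset.coe_insert]; left
        rcases hor with ⟨rfl, rfl⟩ | ⟨rfl, rfl⟩
        · rfl
        · exact Sym2.eq_swap
      refine ⟨(P₁.transfer _ hsub1).append (SimpleGraph.Walk.cons hadj (P₂.transfer _ hsub2)),
        ?_, ?_⟩
      · rw [SimpleGraph.Walk.isPath_def, SimpleGraph.Walk.support_append,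
          SimpleGraph.Walk.support_cons, List.tail_cons, SimpleGraph.Walk.support_transfer,
          SimpleGraph.Walk.support_transfer]
        rw [List.nodup_append]
        exact ⟨(SimpleGraph.Walk.isPath_def _).mp h1, (SimpleGraph.Walk.isPath_def _).mp h2,
          fun u hu v hv huv => by subst huv; exact hdisj u hu hv⟩
      · rw [SimpleGraph.Walk.length_append, SimpleGraph.Walk.length_cons,
          SimpleGraph.Walk.length_transfer, SimpleGraph.Walk.length_transfer]
        omega
    have her := hiff.mp hins
    rw [Finset.erase_eq_of_notMem heE'] at her
    obtain ⟨w, -, -⟩ := her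
    -- every walk from a vertex in P₁.support to t in fromEdgeSet E' is impossible
    have key : ∀ (u z : V) (w : (fromEdgeSet (↑E' : Set (Sym2 V))).Walk u z),
        z = t → u ∈ P₁.support → False := by
      intro u z w'
      induction w' with
      | nil => exact fun hz h => hdisj _ h (hz.symm ▸ P₂.end_mem_support)
      | @cons u' v' _ h q ih =>
        intro hz hu
        have h' := h
        rw [fromEdgeSet_adj] at h'
        obtain ⟨hmem, -⟩ := h'
        rw [Finset.mem_coe, hE'def, Finset.mem_union, List.mem_toFinset, List.mem_toFinset] at hmem
        rcases hmem with hmem | hmem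
        · exact ih hz (P₁.snd_mem_support_of_mem_edges hmem)
        · exact hdisj u' hu (P₂.fst_mem_support_of_mem_edges hmem)
    exact key s t w rfl P₁.start_mem_support
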